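/- For a monomial ideal I ⊆ S that is positively t-determined, the map sending x^a ∈ √I to x^{r(a)} ∈ I (in degree a of r^*I) is an isomorphism of ℤ^n-graded S-modules; in particular r^*I ≅ √I. -/

import Mathlib

open MvPolynomial

noncomputable def mono (K : Type) [Field K] {n : ℕ} (a : Fin n → ℕ) : MvPolynomial (Fin n) K :=
  monomial (Finsupp.equivFunOnFinite.symm a) 1

def rmap {n : ℕ} (t a : Fin n → ℕ) : Fin n → ℕ := fun i => if 0 < a i then t i else 0

def sqrtv {n : ℕ} (a : Fin n → ℕ) : Fin n → ℕ := fun i => if 0 < a i then 1 else 0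

structure MultiGrading (K : Type) [Field K] (n : ℕ) (M : Type) [AddCommGroup M]
    [Module (MvPolynomial (Fin n) K) M] [Module K M]
    [IsScalarTower K (MvPolynomial (Fin n) K) M] where
  g : (Fin n → ℕ) → Submodule K M
  internal : DirectSum.IsInternal g
  compat : ∀ a b : Fin n → ℕ, ∀ m ∈ g a, mono K b • m ∈ g (a + b)

variable {K : Type} [Field K] {n : ℕ}

def PosDetermined {M : Type} [AddCommGroup M] [Module (MvPolynomial (Fin n) K) M] [Module K M]
    [IsScalarTower K (MvPolynomial (Fin n) K) M] (G : MultiGrading K n M) (t : Fin n → ℕ) : Prop :=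
  ∀ (a : Fin n → ℕ) (i : Fin n), t i ≤ a i →
    Set.BijOn (fun m => (X i : MvPolynomial (Fin n) K) • m) (G.g a : Set M) (G.g (a + Pi.single i 1) : Set M)

def IsRStar {M N : Type} [AddCommGroup M] [Module (MvPolynomial (Fin n) K) M] [Module K M]
    [IsScalarTower K (MvPolynomial (Fin n) K) M]
    [AddCommGroup N] [Module (MvPolynomial (Fin n) K) N] [Module K N]
    [IsScalarTower K (MvPolynomial (Fin n) K) N]
    (t : Fin n → ℕ) (G : MultiGrading K n M) (H : MultiGrading K n N) : Prop :=
  ∃ e : (Fin n → ℕ) → (M →ₗ[K] N),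
    (∀ a, Set.InjOn (e a) (G.g (rmap t a))) ∧
    (∀ a, e a '' (G.g (rmap t a)) = (H.g a : Set N)) ∧
    (∀ a b : Fin n → ℕ, ∀ m ∈ G.g (rmap t a),
      e (a + b) (mono K (rmap t (a + b) - rmap t a) • m) = mono K b • e a m)

noncomputable def mdim (R : Type) [CommRing R] (M : Type) [AddCommGroup M] [Module R M] :
    WithBot ℕ∞ :=
  ringKrullDim (R ⧸ (⊤ : Submodule R M).annihilator)

noncomputable def mdepth (K : Type) [Field K] (n : ℕ) (M : Type) [AddCommGroup M] [Module (MvPolynomial (Fin n) K) M] : ℕ :=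
  sSup {k : ℕ | ∃ rs : List (MvPolynomial (Fin n) K), rs.length = k ∧
    (∀ r ∈ rs, r ∈ Ideal.span (Set.range (X : Fin n → MvPolynomial (Fin n) K))) ∧
    RingTheory.Sequence.IsRegular M rs}

noncomputable def IsCM (K : Type) [Field K] (n : ℕ) (M : Type) [AddCommGroup M] [Module (MvPolynomial (Fin n) K) M] : Prop :=
  (mdepth K n M : WithBot ℕ∞) = mdim (MvPolynomial (Fin n) K) M

/-- The degree-`a` component of a monomial ideal `I`, as a `K`-subspace of `↥I`:
the preimage of `K·x^a` under the inclusion `I ⊆ S`. -/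
noncomputable def idealPiece (I : Ideal (MvPolynomial (Fin n) K)) (a : Fin n → ℕ) :
    Submodule K ↥I :=
  Submodule.comap ((Submodule.subtype (I : Submodule (MvPolynomial (Fin n) K)
    (MvPolynomial (Fin n) K))).restrictScalars K) (Submodule.span K {mono K a})

/-- for a positively `t`-determined monomial ideal `I`, the map `x^a ↦ x^{r(a)}`
gives an isomorphism of `ℤ^n`-graded `S`-modules `r^*I ≅ √I`. Here `G` is the natural grading
of the module `↥I`, `(N, H)` realizes `r^*I`, and the conclusion is a graded isomorphism with
`√I`, carrying its natural grading. -/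


lemma symm_add (a b : Fin n → ℕ) : Finsupp.equivFunOnFinite.symm (a + b) =
    Finsupp.equivFunOnFinite.symm a + Finsupp.equivFunOnFinite.symm b := by ext i; simp

lemma symm_smul (k : ℕ) (a : Fin n → ℕ) : Finsupp.equivFunOnFinite.symm (k • a) =
    k • Finsupp.equivFunOnFinite.symm a := by ext i; simp

lemma mono_mul (a b : Fin n → ℕ) : mono K a * mono K b = mono K (a + b) := by
  simp [mono, monomial_mul, symm_add]

lemma mono_coe (d : Fin n →₀ ℕ) : mono K ⇑d = monomial d 1 := by simp [mono]

lemma mono_ne_zero (a : Fin n → ℕ) : mono K a ≠ 0 := by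
  simp [mono, monomial_eq_zero]

lemma support_mono (a : Fin n → ℕ) :
    (mono K a).support = {Finsupp.equivFunOnFinite.symm a} := by
  classical
  rw [mono, support_monomial]
  simp

lemma mono_pow (a : Fin n → ℕ) (k : ℕ) : mono K a ^ k = mono K (k • a) := by
  rw [mono, mono, monomial_pow, one_pow, symm_smul]

lemma mono_single_eq_X (i : Fin n) : mono K (Pi.single i 1) = (X i : MvPolynomial (Fin n) K) := by
  rw [mono, X]
  congr 1
  ext j; simp [Finsupp.single_apply, Pi.single_apply, eq_comm]

lemma symm_le_iff (b : Fin n → ℕ) (d : Fin n →₀ ℕ) :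
    Finsupp.equivFunOnFinite.symm b ≤ d ↔ b ≤ ⇑d := by
  rw [Finsupp.le_def]
  exact forall_congr' fun i => by simp

/-- membership criterion for a monomial ideal -/
lemma mem_span_mono_iff (B : Set (Fin n → ℕ)) (p : MvPolynomial (Fin n) K) :
    p ∈ Ideal.span (mono K '' B) ↔ ∀ d ∈ p.support, ∃ b ∈ B, b ≤ ⇑d := by
  have himg : mono K '' B =
      (fun s => monomial s (1:K)) '' (Finsupp.equivFunOnFinite.symm '' B) := by
    rw [Set.image_image]; rfl
  rw [himg, mem_ideal_span_monomial_image]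
  refine forall₂_congr fun d _ => ?_
  constructor
  · rintro ⟨s, ⟨b, hb, rfl⟩, hs⟩; exact ⟨b, hb, (symm_le_iff b d).1 hs⟩
  · rintro ⟨b, hb, hs⟩; exact ⟨_, ⟨b, hb, rfl⟩, (symm_le_iff b d).2 hs⟩

lemma coe_symm (c : Fin n → ℕ) : ⇑(Finsupp.equivFunOnFinite.symm c) = c := rfl

lemma mono_mem_span_mono_iff (B : Set (Fin n → ℕ)) (c : Fin n → ℕ) :
    mono K c ∈ Ideal.span (mono K '' B) ↔ ∃ b ∈ B, b ≤ c := by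
  rw [mem_span_mono_iff, support_mono]
  simp [coe_symm]

lemma span_X_isPrime (F : Set (Fin n)) :
    (Ideal.span (mono K '' {v | ∃ i ∈ F, v = Pi.single i 1})).IsPrime := by
  classical
  set f : Fin n → MvPolynomial (Fin n) K := fun i => if i ∈ F then 0 else X i with hf
  have hmono : ∀ (d : Fin n →₀ ℕ) (c : K),
      aeval f (monomial d c) = if ∃ i ∈ F, 0 < d i then 0 else monomial d c := by
    intro d c
    rw [aeval_monomial]
    split_ifs with h
    · obtain ⟨i, hi, hdi⟩ := h
      have hmem : i ∈ d.support := Finsupp.mem_support_iff.2 hdi.ne'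
      rw [Finsupp.prod, Finset.prod_eq_zero hmem]
      · ring
      · simp [hf, hi, zero_pow hdi.ne']
    · push_neg at h
      have : (d.prod fun i k => f i ^ k) = d.prod fun i k => X i ^ k := by
        apply Finsupp.prod_congr
        intro i hi
        have : i ∉ F := fun hiF => by
          have h0 : d i = 0 := Nat.le_zero.mp (by simpa using h i hiF)
          exact (Finsupp.mem_support_iff.1 hi) h0
        simp [hf, this]
      rw [this, algebraMap_eq, ← monomial_eq]
  have hker : Ideal.span (mono K '' {v | ∃ i ∈ F, v = Pi.single i 1}) =
      RingHom.ker ((aeval f : MvPolynomial (Fin n) K →ₐ[K] MvPolynomial (Fin n) K)).toRingHom := by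
    apply le_antisymm
    · rw [Ideal.span_le]
      rintro _ ⟨v, ⟨i, hiF, rfl⟩, rfl⟩
      simp only [SetLike.mem_coe, RingHom.mem_ker, AlgHom.toRingHom_eq_coe, RingHom.coe_coe]
      rw [mono_single_eq_X, aeval_X]
      simp [hf, hiF]
    · intro p hp
      rw [mem_span_mono_iff]
      intro d hd
      by_contra hcon
      push_neg at hcon
      have huntouched : ¬ ∃ i ∈ F, 0 < d i := by
        rintro ⟨i, hiF, hdi⟩
        apply hcon (Pi.single i 1) ⟨i, hiF, rfl⟩
        intro j
        rw [Pi.single_apply]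
        split_ifs with hji
        · exact hji ▸ hdi
        · exact Nat.zero_le _
      have h0 : aeval f p = 0 := hp
      rw [p.as_sum, map_sum] at h0
      have := congrArg (coeff d) h0
      rw [coeff_sum] at this
      rw [Finset.sum_eq_single d] at this
      · rw [hmono, if_neg huntouched, coeff_monomial, if_pos rfl] at this
        exact (MvPolynomial.mem_support_iff.1 hd) (by simpa using this)
      · intro b hb hbd
        rw [hmono]
        split_ifs
        · simp
        · rw [coeff_monomial, if_neg hbd]
      · intro h; exact absurd hd h
  rw [hker]
  exact RingHom.ker_isPrime _

lemma radical_eq_span (A : Set (Fin n → ℕ)) :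
    (Ideal.span (mono K '' A)).radical = Ideal.span (mono K '' (sqrtv '' A)) := by
  apply le_antisymm
  · intro p hp
    rw [mem_span_mono_iff]
    intro d hd
    by_contra hcon
    push_neg at hcon
    have hcon' : ∀ b ∈ A, ¬ sqrtv b ≤ ⇑d := by
      intro b hb
      exact hcon (sqrtv b) ⟨b, hb, rfl⟩
    set F : Set (Fin n) := {i | d i = 0} with hF
    have hprime := span_X_isPrime (K := K) F
    have hIP : Ideal.span (mono K '' A) ≤
        Ideal.span (mono K '' {v | ∃ i ∈ F, v = Pi.single i 1}) := by
      rw [Ideal.span_le]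
      rintro _ ⟨b, hb, rfl⟩
      have hnle := hcon' b hb
      simp only [SetLike.mem_coe]
      rw [mono_mem_span_mono_iff]
      rw [Pi.le_def, not_forall] at hnle
      obtain ⟨i, hi⟩ := hnle
      have hbi : 0 < b i := by
        by_contra h
        simp [sqrtv, h] at hi
      have hdi : d i = 0 := by
        simp only [sqrtv, if_pos hbi] at hi
        exact Nat.eq_zero_of_not_pos hi
      refine ⟨Pi.single i 1, ⟨i, hdi, rfl⟩, fun j => ?_⟩
      rw [Pi.single_apply]
      split_ifs with hji
      · exact hji ▸ hbi
      · exact Nat.zero_le _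
    have hpP := hprime.radical_le_iff.mpr hIP hp
    rw [mem_span_mono_iff] at hpP
    obtain ⟨v, ⟨i, hiF, rfl⟩, hle⟩ := hpP d hd
    have h1 : 1 ≤ d i := by simpa [Pi.single_apply] using hle i
    have h0 : d i = 0 := hiF
    rw [h0] at h1
    exact Nat.not_succ_le_zero 0 h1
  · rw [Ideal.span_le]
    rintro _ ⟨v, ⟨b, hb, rfl⟩, rfl⟩
    have hT : mono K (sqrtv b) ^ ((Finset.univ.sup b) + 1) ∈ Ideal.span (mono K '' A) := by
      rw [mono_pow, mono_mem_span_mono_iff]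
      refine ⟨b, hb, fun i => ?_⟩
      simp only [Pi.smul_apply, smul_eq_mul, sqrtv]
      split_ifs with h
      · have : b i ≤ Finset.univ.sup b := Finset.le_sup (Finset.mem_univ i)
        omega
      · omega
    exact Ideal.mem_radical_iff.2 ⟨_, hT⟩

-- rmap lemmas
lemma le_rmap_iff {t b : Fin n → ℕ} (hb : b ≤ t) (a : Fin n → ℕ) :
    b ≤ rmap t a ↔ sqrtv b ≤ a := by
  constructor
  · intro h i
    by_cases hbi : 0 < b i
    · have := h i
      simp only [rmap] at this
      rw [sqrtv, if_pos hbi]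
      by_cases hai : 0 < a i
      · exact hai
      · rw [if_neg hai] at this; omega
    · rw [sqrtv, if_neg hbi]; exact Nat.zero_le _
  · intro h i
    by_cases hbi : 0 < b i
    · have h1 := h i
      rw [sqrtv, if_pos hbi] at h1
      have hai : 0 < a i := h1
      rw [rmap]
      rw [if_pos hai]
      exact hb i
    · simpa using Nat.eq_zero_of_not_pos hbi ▸ Nat.zero_le _

lemma rmap_sub_add (t a b : Fin n → ℕ) :
    (rmap t (a + b) - rmap t a) + rmap t a = rmap t (a + b) := by
  funext i
  simp only [Pi.add_apply, Pi.sub_apply, rmap]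
  have hle : (if 0 < a i then t i else 0) ≤ (if 0 < a i + b i then t i else 0) := by
    split_ifs with h1 h2 <;> omega
  omega

set_option maxHeartbeats 1000000 in
theorem rstar_ideal_iso_radical {N : Type}
    [AddCommGroup N] [Module (MvPolynomial (Fin n) K) N] [Module K N]
    [IsScalarTower K (MvPolynomial (Fin n) K) N]
    (t : Fin n → ℕ) (ht : ∀ i, 1 ≤ t i)
    (I : Ideal (MvPolynomial (Fin n) K)) (A : Set (Fin n → ℕ)) (hA : ∀ b ∈ A, b ≤ t)
    (hI : I = Ideal.span ((fun b => mono K b) '' A))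
    (G : MultiGrading K n ↥I) (hG : ∀ a : Fin n → ℕ, G.g a = idealPiece I a)
    (H : MultiGrading K n N) (hN : IsRStar t G H) :
    ∃ e : N ≃ₗ[MvPolynomial (Fin n) K] ↥(I.radical),
      ∀ a : Fin n → ℕ,
        Submodule.map (e.toLinearMap.restrictScalars K) (H.g a) =
          idealPiece I.radical a := by
  classical
  obtain ⟨e, hinj, himg, hcompat⟩ := hN
  set S := MvPolynomial (Fin n) K with hS
  -- the "good" predicate
  set good : (Fin n → ℕ) → Prop := fun a => mono K (rmap t a) ∈ I with hgood
  have hgood_rad : ∀ a, good a ↔ mono K a ∈ I.radical := by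
    intro a
    show mono K (rmap t a) ∈ I ↔ _
    rw [hI, radical_eq_span, mono_mem_span_mono_iff, mono_mem_span_mono_iff]
    constructor
    · rintro ⟨b, hb, hle⟩
      exact ⟨sqrtv b, ⟨b, hb, rfl⟩, (le_rmap_iff (hA b hb) a).1 hle⟩
    · rintro ⟨_, ⟨b, hb, rfl⟩, hle⟩
      exact ⟨b, hb, (le_rmap_iff (hA b hb) a).2 hle⟩
  have hrad_supp : ∀ p ∈ I.radical, ∀ d ∈ p.support, good ⇑d := by
    intro p hp d hd
    rw [hI, radical_eq_span, mem_span_mono_iff] at hp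
    obtain ⟨_, ⟨b, hb, rfl⟩, hle⟩ := hp d hd
    show mono K (rmap t ⇑d) ∈ I
    rw [hI, mono_mem_span_mono_iff]
    exact ⟨b, hb, (le_rmap_iff (hA b hb) ⇑d).2 hle⟩
  have hgood_add : ∀ a b, good a → good (a + b) := by
    intro a b h
    show mono K (rmap t (a + b)) ∈ I
    rw [← rmap_sub_add t a b, ← mono_mul]
    exact Ideal.mul_mem_left _ _ h
  -- membership in idealPiece
  have hpiece : ∀ (J : Ideal S) (c : Fin n → ℕ) (x : ↥J),
      x ∈ idealPiece J c ↔ (x : S) ∈ Submodule.span K {mono K c} := fun J c x => Iff.rfl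
  -- the element of G.g
  have melt : ∀ a (h : good a),
      (⟨mono K (rmap t a), h⟩ : ↥I) ∈ G.g (rmap t a) := by
    intro a h
    rw [hG, hpiece]
    exact Submodule.mem_span_singleton_self _
  -- the image vectors
  set nv : (Fin n → ℕ) → N :=
    fun a => if h : good a then e a ⟨mono K (rmap t a), h⟩ else 0 with hnv
  have hnv_mem : ∀ a, nv a ∈ H.g a := by
    intro a
    show (if h : good a then e a ⟨mono K (rmap t a), h⟩ else 0) ∈ H.g a
    split_ifs with h
    · show e a _ ∈ (H.g a : Set N)
      rw [← himg a]
      exact ⟨_, melt a h, rfl⟩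
    · exact zero_mem _
  have hnv_ne : ∀ a, good a → nv a ≠ 0 := by
    intro a h h0
    replace h0 : (if h : good a then e a ⟨mono K (rmap t a), h⟩ else 0) = 0 := h0
    rw [dif_pos h] at h0
    have h0' : e a ⟨mono K (rmap t a), h⟩ = e a 0 := by rw [h0, map_zero]
    have := hinj a (melt a h) (zero_mem _) h0'
    exact mono_ne_zero _ (congrArg Subtype.val this)
  -- the assembling map on polynomials
  set Ψ : MvPolynomial (Fin n) K →ₗ[K] N :=
    Finsupp.lsum K (fun d : Fin n →₀ ℕ => LinearMap.toSpanSingleton K N (nv ⇑d)) ∘ₗ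
      (AddMonoidAlgebra.coeffLinearEquiv K).toLinearMap with hΨ
  have Ψmono : ∀ (d : Fin n →₀ ℕ) (c : K), Ψ (monomial d c) = c • nv ⇑d := by
    intro d c
    have h1 : (Finsupp.lsum K (fun d : Fin n →₀ ℕ => LinearMap.toSpanSingleton K N (nv ⇑d)))
        (Finsupp.single d c) = c • nv ⇑d := by
      rw [Finsupp.lsum_single, LinearMap.toSpanSingleton_apply]
    rw [hΨ, ← single_eq_monomial]
    exact h1
  have Ψc : ∀ c : Fin n → ℕ, Ψ (mono K c) = nv c := by
    intro c
    rw [mono, Ψmono, coe_symm, one_smul]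
  have ΨI : ∀ p : MvPolynomial (Fin n) K,
      Ψ p = ∑ d ∈ p.support, coeff d p • nv ⇑d := by
    intro p
    conv_lhs => rw [p.as_sum]
    rw [map_sum]
    exact Finset.sum_congr rfl fun d _ => Ψmono d _
  -- multiplicativity on good monomials
  have hkey : ∀ a b, good a → nv (a + b) = mono K b • nv a := by
    intro a b h
    have hab := hgood_add a b h
    have harg : (mono K (rmap t (a + b) - rmap t a) • (⟨mono K (rmap t a), h⟩ : ↥I)) =
        (⟨mono K (rmap t (a + b)), hab⟩ : ↥I) := by
      apply Subtype.ext
      rw [Submodule.coe_smul, smul_eq_mul]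
      show mono K _ * mono K _ = mono K _
      rw [mono_mul, rmap_sub_add]
    have hc := hcompat a b ⟨mono K (rmap t a), h⟩ (melt a h)
    rw [harg] at hc
    show (if h : good (a + b) then e (a + b) ⟨mono K (rmap t (a + b)), h⟩ else 0) =
      mono K b • (if h' : good a then e a ⟨mono K (rmap t a), h'⟩ else 0)
    rw [dif_pos hab, dif_pos h]
    exact hc
  have span_range_mono : (⊤ : Submodule K (MvPolynomial (Fin n) K)) ≤
      Submodule.span K (Set.range (mono K (n := n))) := by
    intro p _
    have hrepr : p = ∑ d ∈ p.support, coeff d p • mono K ⇑d := by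
      conv_lhs => rw [p.as_sum]
      refine Finset.sum_congr rfl fun d _ => ?_
      rw [mono_coe, smul_monomial, smul_eq_mul, mul_one]
    rw [hrepr]
    exact Submodule.sum_mem _ fun d _ =>
      Submodule.smul_mem _ _ (Submodule.subset_span ⟨⇑d, rfl⟩)
  have hsmul_comm : ∀ (c : K) (q : MvPolynomial (Fin n) K) (y : N),
      c • (q • y) = q • (c • y) := by
    intro c q y
    calc c • (q • y) = (c • q) • y := (smul_assoc c q y).symm
    _ = (C c * q) • y := by rw [MvPolynomial.smul_eq_C_mul]
    _ = (q * C c) • y := by rw [mul_comm]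
    _ = q • ((C c : MvPolynomial (Fin n) K) • y) := mul_smul q _ y
    _ = q • (c • y) := by
        rw [show (C c : MvPolynomial (Fin n) K) • y = c • y from by
          rw [← MvPolynomial.algebraMap_eq]; exact algebraMap_smul _ c y]
  have Ψ_mul_mono : ∀ a, good a → ∀ q : MvPolynomial (Fin n) K,
      Ψ (q * mono K a) = q • Ψ (mono K a) := by
    intro a hga q
    have hq : q ∈ Submodule.span K (Set.range (mono K (n := n))) :=
      span_range_mono Submodule.mem_top
    induction hq using Submodule.span_induction with
    | mem x hx =>
      obtain ⟨b, rfl⟩ := hx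
      rw [mono_mul, add_comm b a, Ψc, Ψc, hkey a b hga]
    | zero => simp
    | add x y hx hy ihx ihy => rw [add_mul, map_add, ihx, ihy, add_smul]
    | smul c x hx ih => rw [smul_mul_assoc, map_smul, ih, smul_assoc]
  have Ψ_mul : ∀ (q p : MvPolynomial (Fin n) K), (∀ d ∈ p.support, good ⇑d) →
      Ψ (q * p) = q • Ψ p := by
    intro q p hp
    have h1 : q * p = ∑ d ∈ p.support, coeff d p • (q * mono K ⇑d) := by
      conv_lhs => rw [p.as_sum]
      rw [Finset.mul_sum]
      refine Finset.sum_congr rfl fun d _ => ?_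
      rw [mono_coe, ← mul_smul_comm, smul_monomial, smul_eq_mul, mul_one]
    rw [h1, map_sum]
    have h2 : ∑ d ∈ p.support, Ψ (coeff d p • (q * mono K ⇑d)) =
        ∑ d ∈ p.support, coeff d p • (q • Ψ (mono K ⇑d)) :=
      Finset.sum_congr rfl fun d hd => by rw [map_smul, Ψ_mul_mono ⇑d (hp d hd) q]
    rw [h2, ΨI p, Finset.smul_sum]
    exact Finset.sum_congr rfl fun d _ => by rw [Ψc, hsmul_comm]
  -- the S-linear map
  set ψ : ↥(I.radical) →ₗ[MvPolynomial (Fin n) K] N :=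
    { toFun := fun x => Ψ ↑x
      map_add' := fun x y => by
        show Ψ ↑(x + y) = Ψ ↑x + Ψ ↑y
        rw [Submodule.coe_add, map_add]
      map_smul' := fun q x => by
        simp only [RingHom.id_apply]
        have hcoe : ((q • x : ↥(I.radical)) : MvPolynomial (Fin n) K) = q * ↑x := rfl
        show Ψ ↑(q • x) = q • Ψ ↑x
        rw [hcoe, Ψ_mul q ↑x (hrad_supp ↑x x.2)] } with hψ
  have hψ_apply : ∀ x : ↥(I.radical), ψ x = Ψ ↑x := fun x => rfl
  -- decomposition of N
  haveI : DirectSum.Decomposition H.g := H.internal.chooseDecomposition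
  have hproj : ∀ (p : MvPolynomial (Fin n) K), (∀ d ∈ p.support, good ⇑d) →
      ∀ d₀ ∈ p.support,
      ((DirectSum.decompose H.g (Ψ p) ⇑d₀ : ↥(H.g ⇑d₀)) : N) = coeff d₀ p • nv ⇑d₀ := by
    intro p hgd d₀ hd₀
    rw [ΨI p, DirectSum.decompose_sum, DFinsupp.finset_sum_apply,
      AddSubmonoidClass.coe_finset_sum]
    rw [Finset.sum_eq_single d₀]
    · rw [DirectSum.decompose_of_mem_same H.g
        (Submodule.smul_mem _ _ (hnv_mem ⇑d₀))]
    · intro b hb hbne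
      rw [DirectSum.decompose_of_mem_ne H.g
        (Submodule.smul_mem _ _ (hnv_mem ⇑b))
        (fun hc => hbne (DFunLike.coe_injective hc))]
    · intro h; exact absurd hd₀ h
  -- injectivity
  have hinj' : Function.Injective ψ := by
    rw [injective_iff_map_eq_zero]
    intro x hx0
    by_contra hne
    have hp0 : (x : MvPolynomial (Fin n) K) ≠ 0 := fun h => hne (Subtype.ext h)
    obtain ⟨d₀, hd₀⟩ := Finset.nonempty_iff_ne_empty.2
      (fun h => hp0 (support_eq_empty.1 h))
    have hgd := hrad_supp ↑x x.2
    have hpr := hproj ↑x hgd d₀ hd₀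
    rw [← hψ_apply, hx0, DirectSum.decompose_zero] at hpr
    simp only [DirectSum.zero_apply, ZeroMemClass.coe_zero] at hpr
    have hcne : coeff d₀ (x : MvPolynomial (Fin n) K) ≠ 0 := mem_support_iff.1 hd₀
    apply hnv_ne ⇑d₀ (hgd d₀ hd₀)
    calc nv ⇑d₀ = (coeff d₀ (x : MvPolynomial (Fin n) K))⁻¹ •
          (coeff d₀ (x : MvPolynomial (Fin n) K) • nv ⇑d₀) := (inv_smul_smul₀ hcne _).symm
    _ = (coeff d₀ (x : MvPolynomial (Fin n) K))⁻¹ • (0 : N) := by rw [← hpr]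
    _ = 0 := smul_zero _
  -- surjectivity
  have hsurj : Function.Surjective ψ := by
    intro m
    have hm : m ∈ (⊤ : Submodule K N) := Submodule.mem_top
    rw [← H.internal.submodule_iSup_eq_top] at hm
    refine Submodule.iSup_induction H.g (motive := fun m => ∃ x, ψ x = m) hm ?_ ⟨0, map_zero ψ⟩ ?_
    · intro a m hma
      have hma' : m ∈ (H.g a : Set N) := hma
      rw [← himg a] at hma'
      obtain ⟨m', hm', rfl⟩ := hma'
      have hm2 : m' ∈ G.g (rmap t a) := hm'
      rw [hG, hpiece, Submodule.mem_span_singleton] at hm2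
      obtain ⟨c, hc⟩ := hm2
      by_cases hga : good a
      · refine ⟨⟨c • mono K a, by
          rw [MvPolynomial.smul_eq_C_mul]
          exact Ideal.mul_mem_left _ _ ((hgood_rad a).1 hga)⟩, ?_⟩
        rw [hψ_apply]
        show Ψ (c • mono K a) = e a m'
        rw [map_smul, Ψc]
        have hm'eq : m' = c • (⟨mono K (rmap t a), hga⟩ : ↥I) :=
          Subtype.ext (by rw [← hc]; rfl)
        rw [hm'eq, map_smul]
        show c • nv a = c • e a ⟨mono K (rmap t a), hga⟩
        rw [show nv a = e a ⟨mono K (rmap t a), hga⟩ from dif_pos hga]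
      · have hc0 : c = 0 := by
          by_contra hc0
          apply hga
          show mono K (rmap t a) ∈ I
          have hrw : mono K (rmap t a) = C c⁻¹ * (m' : MvPolynomial (Fin n) K) := by
            rw [← hc, ← MvPolynomial.smul_eq_C_mul, inv_smul_smul₀ hc0]
          rw [hrw]
          exact Ideal.mul_mem_left _ _ m'.2
        have hm0 : m' = 0 := Subtype.ext (by rw [← hc, hc0, zero_smul]; simp)
        exact ⟨0, by rw [map_zero, hm0, map_zero]⟩
    · rintro x y ⟨u, rfl⟩ ⟨v, rfl⟩
      exact ⟨u + v, map_add ψ u v⟩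
  -- assemble the equivalence
  set E := LinearEquiv.ofBijective ψ ⟨hinj', hsurj⟩ with hE
  have hE_apply : ∀ x, E x = ψ x := fun x => rfl
  -- the characterization of graded pieces
  have hchar : ∀ (a : Fin n → ℕ) (x : ↥(I.radical)),
      ψ x ∈ H.g a ↔ x ∈ idealPiece I.radical a := by
    intro a x
    constructor
    · intro hx
      have hsub : (↑x : MvPolynomial (Fin n) K).support ⊆
          {Finsupp.equivFunOnFinite.symm a} := by
        intro d hd
        rw [Finset.mem_singleton]
        by_contra hne
        have hdne : a ≠ ⇑d := by
          intro hc
          apply hne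
          rw [hc]
          exact (Finsupp.equivFunOnFinite_symm_coe d).symm
        have hgd := hrad_supp ↑x x.2
        have h1 := hproj ↑x hgd d hd
        rw [← hψ_apply x] at h1
        rw [DirectSum.decompose_of_mem_ne H.g hx hdne] at h1
        have hcne : coeff d (↑x : MvPolynomial (Fin n) K) ≠ 0 := mem_support_iff.1 hd
        apply hnv_ne ⇑d (hgd d hd)
        calc nv ⇑d = (coeff d (↑x : MvPolynomial (Fin n) K))⁻¹ •
              (coeff d (↑x : MvPolynomial (Fin n) K) • nv ⇑d) := (inv_smul_smul₀ hcne _).symm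
        _ = (coeff d (↑x : MvPolynomial (Fin n) K))⁻¹ • (0 : N) := by rw [← h1]
        _ = 0 := smul_zero _
      rw [hpiece]
      rcases Finset.subset_singleton_iff.1 hsub with h0 | h1
      · rw [show (↑x : MvPolynomial (Fin n) K) = 0 from support_eq_empty.1 h0]
        exact zero_mem _
      · have hxrepr : (↑x : MvPolynomial (Fin n) K) =
            coeff (Finsupp.equivFunOnFinite.symm a) (↑x : MvPolynomial (Fin n) K) • mono K a := by
          conv_lhs => rw [(↑x : MvPolynomial (Fin n) K).as_sum]
          rw [h1, Finset.sum_singleton, mono, smul_monomial, smul_eq_mul, mul_one]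
        rw [hxrepr]
        exact Submodule.smul_mem _ _ (Submodule.mem_span_singleton_self _)
    · intro hx
      rw [hpiece, Submodule.mem_span_singleton] at hx
      obtain ⟨c, hc⟩ := hx
      rw [hψ_apply, ← hc, map_smul, Ψc]
      exact Submodule.smul_mem _ _ (hnv_mem a)
  refine ⟨E.symm, fun a => ?_⟩
  ext x
  rw [Submodule.mem_map]
  constructor
  · rintro ⟨m, hm, rfl⟩
    show E.symm m ∈ idealPiece I.radical a
    rw [← hchar a (E.symm m)]
    have : ψ (E.symm m) = m := by
      rw [← hE_apply]
      exact E.apply_symm_apply m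
    rw [this]
    exact hm
  · intro hx
    refine ⟨ψ x, (hchar a x).2 hx, ?_⟩
    show E.symm (ψ x) = x
    rw [← hE_apply, E.symm_apply_apply]
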